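/- Improve or localize: let x_0, x_1, …, x_t be generated by the proximal updates x_{τ+1} = S(x_τ). Then for every 0 ≤ τ ≤ t, ‖x_τ − x_0‖ ≤ sqrt( (θ₁/θ₂) · 2 η t · ( f_λ(x_0) − f_λ(x_t) ) ), where η = 1/L, θ₁ = (L − λ⁻¹ + β)λ²L²/(L − λ⁻¹ − β) and θ₂ = (L − λ⁻¹ − β)λL/(L + λ⁻¹ − β − 2μ). -/

import Mathlib

set_option maxHeartbeats 2000000

open scoped RealInnerProductSpace

lemma combo_norm_sq {E : Type*} [NormedAddCommGroup E] [InnerProductSpace ℝ E]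
    (u v : E) (t : ℝ) :
    ‖(1 - t) • u + t • v‖ ^ 2
      = (1 - t) * ‖u‖ ^ 2 + t * ‖v‖ ^ 2 - t * (1 - t) * ‖u - v‖ ^ 2 := by
  have h : ∀ w : E, ‖w‖ ^ 2 = ⟪w, w⟫ := by
    intro w
    exact (real_inner_self_eq_norm_sq w).symm
  rw [h, h, h, h]
  simp only [inner_add_left, inner_add_right, inner_sub_left, inner_sub_right,
    real_inner_smul_left, real_inner_smul_right, real_inner_comm v u]
  ring

lemma strong_min {E : Type*} [NormedAddCommGroup E] [InnerProductSpace ℝ E]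
    (g : E → ℝ) (μ L : ℝ) (hμL : μ ≤ L)
    (hconv : ConvexOn ℝ Set.univ (fun z => g z + μ / 2 * ‖z‖ ^ 2))
    (x p : E) (hp : ∀ y, g p + L / 2 * ‖p - x‖ ^ 2 ≤ g y + L / 2 * ‖y - x‖ ^ 2)
    (y : E) :
    g p + L / 2 * ‖p - x‖ ^ 2 + (L - μ) / 2 * ‖y - p‖ ^ 2
      ≤ g y + L / 2 * ‖y - x‖ ^ 2 := by
  have key : ∀ t : ℝ, 0 < t → t ≤ 1 →
      g p + L / 2 * ‖p - x‖ ^ 2 + (L - μ) / 2 * (1 - t) * ‖y - p‖ ^ 2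
        ≤ g y + L / 2 * ‖y - x‖ ^ 2 := by
    intro t ht ht1
    set z := (1 - t) • p + t • y with hz
    have hconv' : g z + μ / 2 * ‖z‖ ^ 2
        ≤ (1 - t) * (g p + μ / 2 * ‖p‖ ^ 2) + t * (g y + μ / 2 * ‖y‖ ^ 2) :=
      hconv.2 (Set.mem_univ p) (Set.mem_univ y)
        (by linarith : (0:ℝ) ≤ 1 - t) (le_of_lt ht) (by ring)
    have hz2 : ‖z‖ ^ 2 = (1 - t) * ‖p‖ ^ 2 + t * ‖y‖ ^ 2 - t * (1 - t) * ‖p - y‖ ^ 2 :=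
      combo_norm_sq p y t
    have hzx : z - x = (1 - t) • (p - x) + t • (y - x) := by
      rw [hz]
      module
    have hz3 : ‖z - x‖ ^ 2
        = (1 - t) * ‖p - x‖ ^ 2 + t * ‖y - x‖ ^ 2 - t * (1 - t) * ‖p - y‖ ^ 2 := by
      rw [hzx, combo_norm_sq, show (p - x) - (y - x) = p - y by abel]
    have h4 := hp z
    have hyp : ‖y - p‖ = ‖p - y‖ := norm_sub_rev y p
    have ht' : t * (g p + L / 2 * ‖p - x‖ ^ 2 + (L - μ) / 2 * (1 - t) * ‖y - p‖ ^ 2)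
        ≤ t * (g y + L / 2 * ‖y - x‖ ^ 2) := by
      rw [hyp]
      rw [hz3] at h4
      rw [hz2] at hconv'
      nlinarith [hconv', h4]
    exact le_of_mul_le_mul_left ht' ht
  refine le_of_forall_pos_le_add fun ε hε => ?_
  set C := (L - μ) / 2 * ‖y - p‖ ^ 2 with hC
  have hC0 : 0 ≤ C := mul_nonneg (by linarith) (sq_nonneg _)
  rcases eq_or_lt_of_le hC0 with h0 | hpos
  · have hk := key 1 one_pos le_rfl
    have : (L - μ) / 2 * (1 - 1) * ‖y - p‖ ^ 2 = 0 := by ring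
    rw [this] at hk
    linarith
  · set t := min 1 (ε / C) with htdef
    have ht : 0 < t := lt_min one_pos (div_pos hε hpos)
    have ht1 : t ≤ 1 := min_le_left _ _
    have hk := key t ht ht1
    have htC : t * C ≤ ε := by
      calc t * C ≤ (ε / C) * C :=
            mul_le_mul_of_nonneg_right (min_le_right _ _) hC0
        _ = ε := div_mul_cancel₀ _ (ne_of_gt hpos)
    have hexp : (L - μ) / 2 * (1 - t) * ‖y - p‖ ^ 2 = C - t * C := by
      rw [hC]; ring
    rw [hexp] at hk
    linarith



/-- Improve or localize: if `x_{τ+1} = S(x_τ)`, then for every `0 ≤ τ ≤ t`,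
`‖x_τ − x_0‖ ≤ sqrt((θ₁/θ₂)·2ηt·(f_λ(x_0) − f_λ(x_t)))`, where `η = 1/L`,
`θ₁ = (L − λ⁻¹ + β)λ²L²/(L − λ⁻¹ − β)` and `θ₂ = (L − λ⁻¹ − β)λL/(L + λ⁻¹ − β − 2μ)`. -/
theorem improve_or_localize
    {d : ℕ} (hd : 1 ≤ d)
    (f : EuclideanSpace ℝ (Fin d) → ℝ)
    (model : EuclideanSpace ℝ (Fin d) → EuclideanSpace ℝ (Fin d) → ℝ)
    (β μ L lam : ℝ)
    (hβ : 0 < β) (hμ : 0 ≤ μ)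
    (hlsc : LowerSemicontinuous f)
    (hmodel_lsc : ∀ x, LowerSemicontinuous (model x))
    (hmodel_wc : ∀ x, ConvexOn ℝ Set.univ (fun y => model x y + μ / 2 * ‖y‖ ^ 2))
    (hmodel_close : ∀ x y : EuclideanSpace ℝ (Fin d),
      |f y - model x y| ≤ β / 2 * ‖y - x‖ ^ 2)
    (hL : L > 7 / 2 * β + 3 * μ)
    (hlam : lam = (L / 2 + (β + 2 * μ) / 4)⁻¹)
    (prox : EuclideanSpace ℝ (Fin d) → EuclideanSpace ℝ (Fin d))
    (hprox : ∀ x y : EuclideanSpace ℝ (Fin d),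
      f (prox x) + 1 / (2 * lam) * ‖prox x - x‖ ^ 2 ≤ f y + 1 / (2 * lam) * ‖y - x‖ ^ 2)
    (S : EuclideanSpace ℝ (Fin d) → EuclideanSpace ℝ (Fin d))
    (hS : ∀ x y : EuclideanSpace ℝ (Fin d),
      model x (S x) + L / 2 * ‖S x - x‖ ^ 2 ≤ model x y + L / 2 * ‖y - x‖ ^ 2)
    (flam : EuclideanSpace ℝ (Fin d) → ℝ)
    (hflam : ∀ x, flam x = f (prox x) + 1 / (2 * lam) * ‖prox x - x‖ ^ 2) :
    ∀ (xs : ℕ → EuclideanSpace ℝ (Fin d)) (t : ℕ),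
      (∀ τ : ℕ, xs (τ + 1) = S (xs τ)) →
      ∀ τ : ℕ, τ ≤ t →
        ‖xs τ - xs 0‖ ≤
          Real.sqrt
            ((((L - lam⁻¹ + β) * lam ^ 2 * L ^ 2 / (L - lam⁻¹ - β)) /
                ((L - lam⁻¹ - β) * lam * L / (L + lam⁻¹ - β - 2 * μ))) *
              (2 * (1 / L) * t) * (flam (xs 0) - flam (xs t))) := by
  intro xs t hstep τ hτ
  have hL0 : (0:ℝ) < L := by linarith
  have hM0 : (0:ℝ) < L / 2 + (β + 2 * μ) / 4 := by linarith
  have hMne : (L / 2 + (β + 2 * μ) / 4) ≠ 0 := ne_of_gt hM0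
  have hlam_pos : 0 < lam := by rw [hlam]; exact inv_pos.2 hM0
  have hMinv : lam⁻¹ = L / 2 + (β + 2 * μ) / 4 := by rw [hlam, inv_inv]
  have hc2 : 1 / (2 * lam) = L / 4 + β / 8 + μ / 4 := by
    rw [hlam, one_div, mul_inv, inv_inv]
    ring
  -- the per-step decrease constant
  set K : ℝ := (L / 2 + (β + 2 * μ) / 4) * (L - β) / (2 * (L + β)) with hK
  have hK0 : 0 < K := by
    apply div_pos (mul_pos hM0 (by linarith)) (by linarith)
  -- per step descent
  have step : ∀ x : EuclideanSpace ℝ (Fin d),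
      flam (S x) + K * ‖S x - x‖ ^ 2 ≤ flam x := by
    intro x
    have hq := hprox (S x) (prox x)
    rw [hc2] at hq
    have h1 : flam (S x) ≤ f (prox x) + (L / 4 + β / 8 + μ / 4) * ‖prox x - S x‖ ^ 2 := by
      rw [hflam, hc2]; exact hq
    have hA : flam (S x) ≤ f (S x) := by
      have := hprox (S x) (S x)
      rw [hflam]
      simpa using this
    have hB : f (S x) ≤ model x (S x) + β / 2 * ‖S x - x‖ ^ 2 := by
      have := abs_le.1 (hmodel_close x (S x))
      linarith [this.1, this.2]
    have hC := strong_min (model x) μ L (by linarith) (hmodel_wc x) x (S x)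
      (hS x) (prox x)
    have hD : model x (prox x) ≤ f (prox x) + β / 2 * ‖prox x - x‖ ^ 2 := by
      have := abs_le.1 (hmodel_close x (prox x))
      linarith [this.1, this.2]
    have hfx : flam x = f (prox x) + (L / 4 + β / 8 + μ / 4) * ‖prox x - x‖ ^ 2 := by
      rw [hflam, hc2]
    have h1' : flam (S x) ≤ flam x - (L / 4 + β / 8 + μ / 4) * ‖prox x - x‖ ^ 2
        + (L / 4 + β / 8 + μ / 4) * ‖prox x - S x‖ ^ 2 := by
      rw [hfx]; linarith
    have h2' : flam (S x) ≤ flam x + ((L + β) / 2 - (L / 4 + β / 8 + μ / 4)) * ‖prox x - x‖ ^ 2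
        - (L - β) / 2 * ‖S x - x‖ ^ 2 - (L - μ) / 2 * ‖prox x - S x‖ ^ 2 := by
      rw [hfx]; linarith
    have e1 := mul_le_mul_of_nonneg_left h1'
      (show (0:ℝ) ≤ L / 2 + 3 * β / 4 - μ / 2 by linarith)
    have e2 := mul_le_mul_of_nonneg_left h2'
      (show (0:ℝ) ≤ L / 2 + (β + 2 * μ) / 4 by linarith)
    have slack : (0:ℝ) ≤ ((L / 2 + (β + 2 * μ) / 4) * (L / 2 - 3 * β / 4 - μ / 2) / 2)
        * ‖prox x - S x‖ ^ 2 :=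
      mul_nonneg (div_nonneg (mul_nonneg (by linarith) (by linarith)) (by norm_num))
        (sq_nonneg _)
    have goal' : (L + β) * (flam (S x) + K * ‖S x - x‖ ^ 2) ≤ (L + β) * flam x := by
      have hid : (L + β) * (flam (S x) + K * ‖S x - x‖ ^ 2)
          = (L + β) * flam (S x)
            + (L / 2 + (β + 2 * μ) / 4) * (L - β) / 2 * ‖S x - x‖ ^ 2 := by
        rw [hK]
        field_simp
      rw [hid]
      linarith [e1, e2, slack]
    exact le_of_mul_le_mul_left goal' (by linarith)
  -- telescoping sum of decreases
  have key : ∀ s : ℕ, flam (xs (s + 1)) + K * ‖xs (s + 1) - xs s‖ ^ 2 ≤ flam (xs s) := by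
    intro s
    rw [hstep s]
    exact step (xs s)
  have htel : ∑ s ∈ Finset.range t, (flam (xs s) - flam (xs (s + 1)))
      = flam (xs 0) - flam (xs t) := Finset.sum_range_sub' (fun s => flam (xs s)) t
  have hsum4 : K * ∑ s ∈ Finset.range t, ‖xs (s + 1) - xs s‖ ^ 2
      ≤ flam (xs 0) - flam (xs t) := by
    rw [← htel, Finset.mul_sum]
    apply Finset.sum_le_sum
    intro s _
    linarith [key s]
  have hsumnn : (0:ℝ) ≤ ∑ s ∈ Finset.range t, ‖xs (s + 1) - xs s‖ ^ 2 :=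
    Finset.sum_nonneg fun s _ => sq_nonneg _
  have hDnn : (0:ℝ) ≤ flam (xs 0) - flam (xs t) :=
    le_trans (mul_nonneg hK0.le hsumnn) hsum4
  -- triangle inequality
  have hsum1 : ‖xs τ - xs 0‖ ≤ ∑ s ∈ Finset.range τ, ‖xs (s + 1) - xs s‖ := by
    have htel2 : ∑ s ∈ Finset.range τ, (xs (s + 1) - xs s) = xs τ - xs 0 :=
      Finset.sum_range_sub (fun s => xs s) τ
    rw [← htel2]
    exact norm_sum_le _ _
  -- Cauchy-Schwarz
  have hcs : (∑ s ∈ Finset.range τ, ‖xs (s + 1) - xs s‖) ^ 2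
      ≤ (τ : ℝ) * ∑ s ∈ Finset.range τ, ‖xs (s + 1) - xs s‖ ^ 2 := by
    have := Finset.sum_mul_sq_le_sq_mul_sq (Finset.range τ) (fun _ => (1:ℝ))
      (fun s => ‖xs (s + 1) - xs s‖)
    simpa using this
  have hmono : ∑ s ∈ Finset.range τ, ‖xs (s + 1) - xs s‖ ^ 2
      ≤ ∑ s ∈ Finset.range t, ‖xs (s + 1) - xs s‖ ^ 2 :=
    Finset.sum_le_sum_of_subset_of_nonneg
      (Finset.range_subset_range.2 hτ) (fun i _ _ => sq_nonneg _)
  -- the scalar comparison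
  set Θ : ℝ := ((L - lam⁻¹ + β) * lam ^ 2 * L ^ 2 / (L - lam⁻¹ - β)) /
      ((L - lam⁻¹ - β) * lam * L / (L + lam⁻¹ - β - 2 * μ)) with hΘ
  obtain ⟨M, hMval⟩ : ∃ M : ℝ, M = L / 2 + (β + 2 * μ) / 4 := ⟨_, rfl⟩
  have hMpos : (0:ℝ) < M := by rw [hMval]; linarith
  have hlamM : lam = M⁻¹ := by rw [hlam, hMval]
  have hMinv' : lam⁻¹ = M := by rw [hlamM, inv_inv]
  have hKM : K = M * (L - β) / (2 * (L + β)) := by rw [hK, hMval]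
  have hA1 : (0:ℝ) < L - M + β := by rw [hMval]; linarith
  have hA2 : (0:ℝ) < L - M - β := by rw [hMval]; linarith
  have hA3 : (0:ℝ) < L + M - β - 2 * μ := by rw [hMval]; linarith
  have hA2ne : L - M - β ≠ 0 := ne_of_gt hA2
  have hA3ne : L + M - β - 2 * μ ≠ 0 := ne_of_gt hA3
  have hMne' : M ≠ 0 := ne_of_gt hMpos
  have hLne : L ≠ 0 := ne_of_gt hL0
  have hLβne : L + β ≠ 0 := by positivity
  have hΘeq : Θ * (2 / L) * K
      = ((L - β) * (L - M + β) * (L + M - β - 2 * μ))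
        / ((L + β) * (L - M - β) ^ 2) := by
    rw [hΘ, hKM, hMinv', hlamM]
    field_simp
  have hscalar : (1:ℝ) ≤ Θ * (2 / L) * K := by
    rw [hΘeq, le_div_iff₀ (by positivity)]
    rw [hMval]
    have ha : (0:ℝ) ≤ L / 2 - 5 * β / 4 - μ / 2 := by linarith
    have h1 : L / 2 - 5 * β / 4 - μ / 2 ≤ L - β := by linarith
    have h2 : L / 2 - 5 * β / 4 - μ / 2 ≤ L / 2 - β / 4 - μ / 2 := by linarith
    have h3 : L + β ≤ 3 * (L / 2 + 3 * β / 4 - μ / 2) := by linarith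
    have hp1 : (L / 2 - 5 * β / 4 - μ / 2) * (L / 2 - 5 * β / 4 - μ / 2)
        ≤ (L - β) * (L / 2 - β / 4 - μ / 2) := mul_le_mul h1 h2 ha (by linarith)
    nlinarith [mul_le_mul_of_nonneg_left hp1
        (show (0:ℝ) ≤ 3 * (L / 2 + 3 * β / 4 - μ / 2) by linarith),
      mul_le_mul_of_nonneg_right h3 (sq_nonneg (L / 2 - 5 * β / 4 - μ / 2))]
  have hΘpos : 0 < Θ := by
    nlinarith [hscalar, mul_pos (div_pos (by norm_num : (0:ℝ) < 2) hL0) hK0]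
  -- final chain
  have hN2 : ‖xs τ - xs 0‖ ^ 2 ≤ Θ * (2 * (1 / L) * t) * (flam (xs 0) - flam (xs t)) := by
    have c1 : ‖xs τ - xs 0‖ ^ 2 ≤ (∑ s ∈ Finset.range τ, ‖xs (s + 1) - xs s‖) ^ 2 :=
      pow_le_pow_left₀ (norm_nonneg _) hsum1 2
    have c2 : (τ : ℝ) * ∑ s ∈ Finset.range τ, ‖xs (s + 1) - xs s‖ ^ 2
        ≤ (t : ℝ) * ∑ s ∈ Finset.range t, ‖xs (s + 1) - xs s‖ ^ 2 := by
      apply mul_le_mul (Nat.cast_le.2 hτ) hmono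
        (Finset.sum_nonneg fun s _ => sq_nonneg _) (Nat.cast_nonneg _)
    have c3 : (t : ℝ) * ∑ s ∈ Finset.range t, ‖xs (s + 1) - xs s‖ ^ 2
        ≤ Θ * (2 * (1 / L) * t) * (flam (xs 0) - flam (xs t)) := by
      have h5 : (t : ℝ) * ∑ s ∈ Finset.range t, ‖xs (s + 1) - xs s‖ ^ 2
          ≤ (Θ * (2 / L) * K) * ((t : ℝ) * ∑ s ∈ Finset.range t, ‖xs (s + 1) - xs s‖ ^ 2) := by
        nlinarith [mul_nonneg (Nat.cast_nonneg (α := ℝ) t) hsumnn]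
      have h6 : (Θ * (2 / L) * K) * ((t : ℝ) * ∑ s ∈ Finset.range t, ‖xs (s + 1) - xs s‖ ^ 2)
          = (Θ * (2 * (1 / L) * t)) * (K * ∑ s ∈ Finset.range t, ‖xs (s + 1) - xs s‖ ^ 2) := by
        ring
      have h7 : (Θ * (2 * (1 / L) * t)) * (K * ∑ s ∈ Finset.range t, ‖xs (s + 1) - xs s‖ ^ 2)
          ≤ (Θ * (2 * (1 / L) * t)) * (flam (xs 0) - flam (xs t)) :=
        mul_le_mul_of_nonneg_left hsum4 (by positivity)
      calc (t : ℝ) * ∑ s ∈ Finset.range t, ‖xs (s + 1) - xs s‖ ^ 2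
          ≤ (Θ * (2 / L) * K) * ((t : ℝ) * ∑ s ∈ Finset.range t, ‖xs (s + 1) - xs s‖ ^ 2) := h5
        _ = (Θ * (2 * (1 / L) * t)) * (K * ∑ s ∈ Finset.range t, ‖xs (s + 1) - xs s‖ ^ 2) := h6
        _ ≤ (Θ * (2 * (1 / L) * t)) * (flam (xs 0) - flam (xs t)) := h7
        _ = Θ * (2 * (1 / L) * t) * (flam (xs 0) - flam (xs t)) := by ring
    linarith [le_trans c1 (le_trans hcs (le_trans c2 c3))]
  calc ‖xs τ - xs 0‖ = Real.sqrt (‖xs τ - xs 0‖ ^ 2) := (Real.sqrt_sq (norm_nonneg _)).symm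
    _ ≤ Real.sqrt (Θ * (2 * (1 / L) * t) * (flam (xs 0) - flam (xs t))) :=
        Real.sqrt_le_sqrt hN2
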